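/- For every real q with 0 < q < 1, the identity 1 + Σ_{j=1}^∞ q^j / ∏_{k=1}^j (1 - q^k) = ∏_{k=1}^∞ (1 - q^k)^{-1} holds (both sides being finite). -/

import Mathlib

open Finset Filter

private lemma icc_prod_eq_range_prod (q : ℝ) :
    ∀ N : ℕ, (∏ k ∈ Finset.Icc 1 N, (1 - q ^ k))
      = ∏ k ∈ Finset.range N, (1 - q ^ (k + 1)) := by
  intro N
  induction N with
  | zero => simp
  | succ N ih =>
    rw [Finset.prod_Icc_succ_top (Nat.le_add_left 1 N), Finset.prod_range_succ, ih]

private lemma range_prod_pos {q : ℝ} (hq0 : 0 < q) (hq1 : q < 1) (N : ℕ) :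
    0 < ∏ k ∈ Finset.range N, (1 - q ^ (k + 1)) := by
  apply Finset.prod_pos
  intro k _
  have : q ^ (k + 1) < 1 := pow_lt_one₀ hq0.le hq1 (Nat.succ_ne_zero k)
  linarith

private lemma telescoping (q : ℝ) (hq0 : 0 < q) (hq1 : q < 1) :
    ∀ N : ℕ, 1 + ∑ j ∈ Finset.range N,
        (q ^ (j + 1) / ∏ k ∈ Finset.Icc 1 (j + 1), (1 - q ^ k))
      = (∏ k ∈ Finset.range N, (1 - q ^ (k + 1)))⁻¹ := by
  intro N
  induction N with
  | zero => simp
  | succ N ih =>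
    rw [Finset.sum_range_succ, ← add_assoc, ih, icc_prod_eq_range_prod,
      Finset.prod_range_succ]
    have hPN := range_prod_pos hq0 hq1 N
    have hfac : 0 < 1 - q ^ (N + 1) := by
      have : q ^ (N + 1) < 1 := pow_lt_one₀ hq0.le hq1 (Nat.succ_ne_zero N)
      linarith
    field_simp
    ring

/-- **Simplification of the normalizing constant.** For `0 < q < 1`,
`1 + ∑_{j=1}^∞ q^j / ∏_{k=1}^j (1 - q^k) = (∏_{k=1}^∞ (1 - q^k))⁻¹`,
both the series and the infinite product being convergent. -/
theorem zq_eq_inv_euler_prod (q : ℝ) (hq0 : 0 < q) (hq1 : q < 1) :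
    Summable (fun j : ℕ => q ^ (j + 1) / ∏ k ∈ Finset.Icc 1 (j + 1), (1 - q ^ k))
      ∧ Multipliable (fun k : ℕ => 1 - q ^ (k + 1))
      ∧ 1 + (∑' j : ℕ, q ^ (j + 1) / ∏ k ∈ Finset.Icc 1 (j + 1), (1 - q ^ k))
          = (∏' k : ℕ, (1 - q ^ (k + 1)))⁻¹ := by
  have hfac_pos : ∀ k : ℕ, 0 < 1 - q ^ (k + 1) := fun k => by
    have : q ^ (k + 1) < 1 := pow_lt_one₀ hq0.le hq1 (Nat.succ_ne_zero k)
    linarith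
  -- summability of logs and multipliability
  have hgeo : Summable (fun k : ℕ => q ^ (k + 1)) :=
    (summable_geometric_of_lt_one hq0.le hq1).comp_injective (add_left_injective 1)
  have hlog_sum : Summable (fun k : ℕ => Real.log (1 - q ^ (k + 1))) := by
    rw [← summable_neg_iff]
    apply Summable.of_nonneg_of_le (fun k => ?_) (fun k => ?_)
      (hgeo.mul_right (1 - q)⁻¹)
    · have h1 : Real.log (1 - q ^ (k + 1)) ≤ 0 :=
        Real.log_nonpos (hfac_pos k).le (by have := pow_pos hq0 (k + 1); linarith)
      linarith
    · have hx0 : 0 < q ^ (k + 1) := pow_pos hq0 _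
      have h1q : 0 < 1 - q := by linarith
      have hfk := hfac_pos k
      have hexp : (1 - q ^ (k + 1))⁻¹ ≤ Real.exp (q ^ (k + 1) / (1 - q ^ (k + 1))) := by
        have h := Real.add_one_le_exp (q ^ (k + 1) / (1 - q ^ (k + 1)))
        have heq : q ^ (k + 1) / (1 - q ^ (k + 1)) + 1 = (1 - q ^ (k + 1))⁻¹ := by
          field_simp
          ring
        linarith [heq ▸ h]
      have hlog := Real.log_le_log (by positivity) hexp
      rw [Real.log_inv, Real.log_exp] at hlog
      have hxq : q ^ (k + 1) ≤ q := by
        calc q ^ (k + 1) ≤ q ^ 1 := pow_le_pow_of_le_one hq0.le hq1.le (by omega)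
        _ = q := pow_one q
      have hdiv : q ^ (k + 1) / (1 - q ^ (k + 1)) ≤ q ^ (k + 1) * (1 - q)⁻¹ := by
        rw [div_eq_mul_inv]
        exact mul_le_mul_of_nonneg_left (inv_anti₀ h1q (by linarith)) hx0.le
      linarith
  have hexp_prod : HasProd (fun k : ℕ => 1 - q ^ (k + 1))
      (Real.exp (∑' k : ℕ, Real.log (1 - q ^ (k + 1)))) := by
    have h := hlog_sum.hasSum.rexp
    convert h using 2 with k
    simp only [Function.comp_apply]
    rw [Real.exp_log (hfac_pos k)]
  have hmult : Multipliable (fun k : ℕ => 1 - q ^ (k + 1)) := ⟨_, hexp_prod⟩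
  have htprod_pos : 0 < ∏' k : ℕ, (1 - q ^ (k + 1)) := by
    rw [hexp_prod.tprod_eq]; exact Real.exp_pos _
  have hPtend : Tendsto (fun N => ∏ k ∈ Finset.range N, (1 - q ^ (k + 1))) atTop
      (nhds (∏' k : ℕ, (1 - q ^ (k + 1)))) :=
    hmult.hasProd.tendsto_prod_nat
  have hP_anti : Antitone (fun N => ∏ k ∈ Finset.range N, (1 - q ^ (k + 1))) := by
    apply antitone_nat_of_succ_le
    intro n
    rw [Finset.prod_range_succ]
    have h1 : 1 - q ^ (n + 1) ≤ 1 := by have := pow_pos hq0 (n + 1); linarith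
    calc (∏ k ∈ Finset.range n, (1 - q ^ (k + 1))) * (1 - q ^ (n + 1))
        ≤ (∏ k ∈ Finset.range n, (1 - q ^ (k + 1))) * 1 :=
          mul_le_mul_of_nonneg_left h1 (range_prod_pos hq0 hq1 n).le
      _ = _ := mul_one _
  have hPL : ∀ N, (∏' k : ℕ, (1 - q ^ (k + 1)))
      ≤ ∏ k ∈ Finset.range N, (1 - q ^ (k + 1)) := fun N =>
    le_of_tendsto hPtend (eventually_atTop.2 ⟨N, fun m hm => hP_anti hm⟩)
  have hf_nonneg : ∀ j, 0 ≤ q ^ (j + 1) / ∏ k ∈ Finset.Icc 1 (j + 1), (1 - q ^ k) := by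
    intro j
    rw [icc_prod_eq_range_prod]
    have := range_prod_pos hq0 hq1 (j + 1)
    positivity
  have hsummable : Summable (fun j : ℕ =>
      q ^ (j + 1) / ∏ k ∈ Finset.Icc 1 (j + 1), (1 - q ^ k)) := by
    apply summable_of_sum_range_le hf_nonneg (c := (∏' k : ℕ, (1 - q ^ (k + 1)))⁻¹)
    intro n
    have h := telescoping q hq0 hq1 n
    have hinv : (∏ k ∈ Finset.range n, (1 - q ^ (k + 1)))⁻¹
        ≤ (∏' k : ℕ, (1 - q ^ (k + 1)))⁻¹ := inv_anti₀ htprod_pos (hPL n)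
    linarith
  refine ⟨hsummable, hmult, ?_⟩
  have hsum_tend : Tendsto (fun N => 1 + ∑ j ∈ Finset.range N,
      (q ^ (j + 1) / ∏ k ∈ Finset.Icc 1 (j + 1), (1 - q ^ k))) atTop
      (nhds (1 + ∑' j : ℕ, q ^ (j + 1) / ∏ k ∈ Finset.Icc 1 (j + 1), (1 - q ^ k))) :=
    (hsummable.hasSum.tendsto_sum_nat).const_add 1
  have hinv_tend : Tendsto (fun N => (∏ k ∈ Finset.range N, (1 - q ^ (k + 1)))⁻¹) atTop
      (nhds (∏' k : ℕ, (1 - q ^ (k + 1)))⁻¹) := hPtend.inv₀ htprod_pos.ne'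
  apply tendsto_nhds_unique _ hinv_tend
  simpa only [telescoping q hq0 hq1] using hsum_tend
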